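/- arXiv:2601.11548 — 2 statements merged into one kernel-verified Lean document; each statement's English description precedes it below -/
import Mathlib

section
/- Let S ⊂ ℝ^d be a nonempty compact convex set with diameter D, let f : ℝ^d → ℝ have L-Lipschitz gradient on S with G := sup_{x∈S} ‖∇f(x)‖ < ∞, let C ≥ max{L D², G D}, δ ≥ 0, and f* := inf_{x ∈ S} f(x). Suppose each g_δ(x^k) satisfies |⟨∇f(x^k) − g_δ(x^k), s − x^k⟩| ≤ δ for all s ∈ S, and the iterates follow s^k ∈ argmin_{s ∈ S} ⟨g_δ(x^k), s − x^k⟩, g̃_k = ⟨g_δ(x^k), x^k − s^k⟩, x^{k+1} = x^k + (max{g̃_k − δ, 0}/C)(s^k − x^k), starting from x^0 ∈ S. Then for every K ≥ 0, min_{0 ≤ k ≤ K} G(x^k) ≤ √(2C (f(x^0) − f*)/(K+1)) + 2δ, where G(x) = max_{s ∈ S} ⟨∇f(x), x − s⟩ is the Frank–Wolfe gap. -/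
open RealInnerProductSpace

lemma fw_descent {d : ℕ} {S : Set (EuclideanSpace ℝ (Fin d))} (hSconv : Convex ℝ S)
    {f : EuclideanSpace ℝ (Fin d) → ℝ} {L : ℝ}
    (hdiff : ∀ x ∈ S, DifferentiableAt ℝ f x)
    (hLip : ∀ x ∈ S, ∀ y ∈ S, ‖gradient f x - gradient f y‖ ≤ L * ‖x - y‖)
    {x y : EuclideanSpace ℝ (Fin d)} (hx : x ∈ S) (hy : y ∈ S) :
    f y ≤ f x + ⟪gradient f x, y - x⟫ + L / 2 * ‖y - x‖ ^ 2 := by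
  set v := y - x with hv
  have hseg : ∀ t : ℝ, t ∈ Set.Icc (0:ℝ) 1 → x + t • v ∈ S := by
    intro t ht
    simpa [hv] using hSconv.add_smul_sub_mem hx hy ht
  set ψ : ℝ → ℝ := fun t => f (x + t • v) - t * ⟪gradient f x, v⟫ - t ^ 2 * (L * ‖v‖ ^ 2 / 2) with hψ
  have hderiv : ∀ t ∈ Set.Icc (0:ℝ) 1, HasDerivAt ψ
      (⟪gradient f (x + t • v), v⟫ - ⟪gradient f x, v⟫ - 2 * t * (L * ‖v‖ ^ 2 / 2)) t := by
    intro t ht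
    have hc : HasDerivAt (fun t : ℝ => x + t • v) v t := by
      simpa using ((hasDerivAt_id t).smul_const v).const_add x
    have hf : HasFDerivAt f ((InnerProductSpace.toDual ℝ _) (gradient f (x + t • v))) (x + t • v) :=
      (hdiff _ (hseg t ht)).hasGradientAt.hasFDerivAt
    have h1 : HasDerivAt (fun t : ℝ => f (x + t • v)) ⟪gradient f (x + t • v), v⟫ t := by
      have h1' := hf.comp_hasDerivAt t hc
      rw [InnerProductSpace.toDual_apply_apply] at h1'
      exact h1'
    have h2 : HasDerivAt (fun t : ℝ => t * ⟪gradient f x, v⟫) ⟪gradient f x, v⟫ t := by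
      simpa using (hasDerivAt_id t).mul_const _
    have h3 : HasDerivAt (fun t : ℝ => t ^ 2 * (L * ‖v‖ ^ 2 / 2)) (2 * t * (L * ‖v‖ ^ 2 / 2)) t := by
      simpa using ((hasDerivAt_pow 2 t).mul_const (L * ‖v‖ ^ 2 / 2))
    exact (h1.sub h2).sub h3
  have hanti : AntitoneOn ψ (Set.Icc (0:ℝ) 1) := by
    apply antitoneOn_of_deriv_nonpos (convex_Icc 0 1)
    · exact fun t ht => ((hderiv t ht).continuousAt.continuousWithinAt)
    · intro t ht
      rw [interior_Icc] at ht
      have ht' : t ∈ Set.Icc (0:ℝ) 1 := Set.mem_Icc.2 ⟨le_of_lt ht.1, le_of_lt ht.2⟩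
      exact ((hderiv t ht').differentiableAt.differentiableWithinAt)
    · intro t ht
      rw [interior_Icc] at ht
      have ht' : t ∈ Set.Icc (0:ℝ) 1 := Set.mem_Icc.2 ⟨le_of_lt ht.1, le_of_lt ht.2⟩
      rw [(hderiv t ht').deriv]
      have hb : ⟪gradient f (x + t • v) - gradient f x, v⟫ ≤ L * (t * ‖v‖) * ‖v‖ := by
        calc ⟪gradient f (x + t • v) - gradient f x, v⟫ ≤ ‖gradient f (x + t • v) - gradient f x‖ * ‖v‖ :=
              real_inner_le_norm _ _
          _ ≤ (L * ‖(x + t • v) - x‖) * ‖v‖ :=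
              mul_le_mul_of_nonneg_right (hLip _ (hseg t ht') _ hx) (norm_nonneg v)
          _ = L * (t * ‖v‖) * ‖v‖ := by
              rw [show (x + t • v) - x = t • v by abel, norm_smul, Real.norm_eq_abs,
                abs_of_nonneg ht.1.le]
      have := hb
      rw [inner_sub_left] at this
      nlinarith [norm_nonneg v, ht.1.le]
  have h01 := hanti (Set.left_mem_Icc.2 zero_le_one) (Set.right_mem_Icc.2 zero_le_one) zero_le_one
  have hy' : x + (1:ℝ) • v = y := by rw [one_smul, hv]; abel
  have hψ1 : ψ 1 = f y - ⟪gradient f x, v⟫ - L * ‖v‖ ^ 2 / 2 := by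
    simp only [hψ, hy', one_pow, one_mul]
    try ring
  have hψ0 : ψ 0 = f x := by
    norm_num [hψ]
  rw [hψ1, hψ0] at h01
  linarith
open RealInnerProductSpace

/-- Theorem 3.2 (nonconvex Frank–Wolfe with a δ-oracle): the smallest
Frank–Wolfe gap among the first `K+1` iterates is at most
`√(2C (f(x⁰) - f*)/(K+1)) + 2δ`. -/
theorem nonconvex_fw_delta_oracle_rate {d : ℕ}
    (S : Set (EuclideanSpace ℝ (Fin d)))
    (hSne : S.Nonempty) (hScomp : IsCompact S) (hSconv : Convex ℝ S)
    (f : EuclideanSpace ℝ (Fin d) → ℝ) (L C δ : ℝ) (hδ : 0 ≤ δ)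
    (hdiff : ∀ x ∈ S, DifferentiableAt ℝ f x)
    (hLip : ∀ x ∈ S, ∀ y ∈ S, ‖gradient f x - gradient f y‖ ≤ L * ‖x - y‖)
    (hC : C ≥ max (L * (Metric.diam S) ^ 2)
      (sSup ((fun x => ‖gradient f x‖) '' S) * Metric.diam S))
    (x s g : ℕ → EuclideanSpace ℝ (Fin d))
    (hx0 : x 0 ∈ S)
    (horacle : ∀ k, ∀ t ∈ S, |⟪gradient f (x k) - g k, t - x k⟫| ≤ δ)
    (hsS : ∀ k, s k ∈ S)
    (hmin : ∀ k, ∀ t ∈ S, ⟪g k, s k - x k⟫ ≤ ⟪g k, t - x k⟫)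
    (hupd : ∀ k, x (k + 1) =
      x k + (max (⟪g k, x k - s k⟫ - δ) 0 / C) • (s k - x k)) :
    ∀ K : ℕ, ∃ k ≤ K,
      sSup ((fun t => ⟪gradient f (x k), x k - t⟫) '' S) ≤
        Real.sqrt (2 * C * (f (x 0) - sInf (f '' S)) / (K + 1)) + 2 * δ := by
  intro K
  have hD0 : (0:ℝ) ≤ Metric.diam S := Metric.diam_nonneg
  have hfc : ContinuousOn f S := fun z hz => (hdiff z hz).continuousAt.continuousWithinAt
  have hbddb : BddBelow (f '' S) := (hScomp.image_of_continuousOn hfc).bddBelow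
  have hFle : ∀ z ∈ S, sInf (f '' S) ≤ f z := fun z hz => csInf_le hbddb ⟨z, hz, rfl⟩
  obtain ⟨x0, hx0S⟩ := hSne
  have hdistD : ∀ z ∈ S, ∀ w ∈ S, ‖z - w‖ ≤ Metric.diam S := by
    intro z hz w hw
    rw [← dist_eq_norm]
    exact Metric.dist_le_diam_of_mem hScomp.isBounded hz hw
  have hGbdd : BddAbove ((fun x => ‖gradient f x‖) '' S) := by
    refine ⟨‖gradient f x0‖ + |L| * Metric.diam S, ?_⟩
    rintro b ⟨z, hz, rfl⟩
    have h1 := norm_sub_norm_le (gradient f z) (gradient f x0)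
    have h2 : ‖gradient f z - gradient f x0‖ ≤ L * ‖z - x0‖ := hLip z hz x0 hx0S
    have h3 : L * ‖z - x0‖ ≤ |L| * Metric.diam S :=
      mul_le_mul (le_abs_self L) (hdistD z hz x0 hx0S) (norm_nonneg _) (abs_nonneg _)
    dsimp only
    linarith
  have hGnorm : ∀ z ∈ S, ‖gradient f z‖ ≤ sSup ((fun x => ‖gradient f x‖) '' S) :=
    fun z hz => le_csSup hGbdd ⟨z, hz, rfl⟩
  have hGs0 : 0 ≤ sSup ((fun x => ‖gradient f x‖) '' S) :=
    le_trans (norm_nonneg _) (hGnorm x0 hx0S)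
  have hCG : sSup ((fun x => ‖gradient f x‖) '' S) * Metric.diam S ≤ C :=
    le_trans (le_max_right _ _) hC
  have hCL : L * Metric.diam S ^ 2 ≤ C := le_trans (le_max_left _ _) hC
  have hC0 : 0 ≤ C := le_trans (mul_nonneg hGs0 hD0) hCG
  set h : ℕ → ℝ := fun k => max (⟪g k, x k - s k⟫ - δ) 0 with hh
  have hh0 : ∀ k, 0 ≤ h k := fun k => le_max_right _ _
  have horc : ∀ k, ∀ t ∈ S, ⟪gradient f (x k), x k - t⟫ - δ ≤ ⟪g k, x k - t⟫ ∧
      ⟪g k, x k - t⟫ ≤ ⟪gradient f (x k), x k - t⟫ + δ := by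
    intro k t ht
    have habs := abs_le.1 (horacle k t ht)
    have e : ⟪gradient f (x k) - g k, t - x k⟫
        = ⟪g k, x k - t⟫ - ⟪gradient f (x k), x k - t⟫ := by
      simp only [inner_sub_left, inner_sub_right]
      ring
    rw [e] at habs
    exact ⟨by linarith [habs.1], by linarith [habs.2]⟩
  have hkey : ∀ k, x k ∈ S → h k ≤ C := by
    intro k hxk
    have h1 := (horc k (s k) (hsS k)).2
    have h2 : ⟪gradient f (x k), x k - s k⟫ ≤ sSup ((fun x => ‖gradient f x‖) '' S) * Metric.diam S := by
      calc ⟪gradient f (x k), x k - s k⟫ ≤ ‖gradient f (x k)‖ * ‖x k - s k‖ :=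
            real_inner_le_norm _ _
        _ ≤ _ := mul_le_mul (hGnorm _ hxk) (hdistD _ hxk _ (hsS k)) (norm_nonneg _) hGs0
    exact max_le (by linarith) hC0
  have hxS : ∀ k, x k ∈ S := by
    intro k
    induction k with
    | zero => exact hx0
    | succ n ih =>
      have hγ0 : 0 ≤ h n / C := div_nonneg (hh0 n) hC0
      have hγ1 : h n / C ≤ 1 := by
        rcases eq_or_lt_of_le hC0 with hc | hc
        · rw [← hc, div_zero]; norm_num
        · exact div_le_one_of_le₀ (hkey n ih) hC0
      rw [hupd n]
      exact hSconv.add_smul_sub_mem ih (hsS n) ⟨hγ0, hγ1⟩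
  have hdec : ∀ k, h k ^ 2 ≤ 2 * C * (f (x k) - f (x (k + 1))) := by
    intro k
    rcases le_or_gt (⟪g k, x k - s k⟫ - δ) 0 with hle | hpos
    · have hzero : h k = 0 := max_eq_right hle
      have hxx : x (k + 1) = x k := by
        rw [hupd k, show max (⟪g k, x k - s k⟫ - δ) 0 = 0 from hzero]
        simp
      rw [hxx, hzero]
      simp
    · have hhk : h k = ⟪g k, x k - s k⟫ - δ := max_eq_left hpos.le
      have hCpos : 0 < C := lt_of_lt_of_le (hhk ▸ hpos) (hkey k (hxS k))
      have hxk1 : x (k + 1) = x k + (h k / C) • (s k - x k) := hupd k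
      have hdesc := fw_descent hSconv hdiff hLip (hxS k) (hxS (k + 1))
      have hdiffv : x (k + 1) - x k = (h k / C) • (s k - x k) := by
        rw [hxk1]; abel
      rw [hdiffv] at hdesc
      have hin : ⟪gradient f (x k), (h k / C) • (s k - x k)⟫
          = -((h k / C) * ⟪gradient f (x k), x k - s k⟫) := by
        rw [real_inner_smul_right, show s k - x k = -(x k - s k) by abel, inner_neg_right]
        ring
      have hlow : ⟪g k, x k - s k⟫ - δ ≤ ⟪gradient f (x k), x k - s k⟫ := by
        have := (horc k (s k) (hsS k)).2
        linarith
      have hnorm2 : ‖(h k / C) • (s k - x k)‖ ^ 2 = (h k / C) ^ 2 * ‖s k - x k‖ ^ 2 := by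
        rw [norm_smul, mul_pow, Real.norm_eq_abs, sq_abs]
      have hLD : L * ‖s k - x k‖ ^ 2 ≤ C := by
        rcases le_or_gt 0 L with hL | hL
        · calc L * ‖s k - x k‖ ^ 2 ≤ L * Metric.diam S ^ 2 :=
              mul_le_mul_of_nonneg_left
                (pow_le_pow_left₀ (norm_nonneg _) (hdistD _ (hsS k) _ (hxS k)) 2) hL
            _ ≤ C := hCL
        · nlinarith [sq_nonneg ‖s k - x k‖]
      rw [hin, hnorm2] at hdesc
      have hγval : h k / C * C = h k := div_mul_cancel₀ _ hCpos.ne'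
      have hγ0 : 0 ≤ h k / C := div_nonneg (hh0 k) hC0
      nlinarith [mul_le_mul_of_nonneg_left hLD (sq_nonneg (h k / C)),
        mul_le_mul_of_nonneg_left hlow hγ0, sq_nonneg (h k / C), hγval, hhk]
  have hsum : ∀ n : ℕ, ∑ k ∈ Finset.range (n + 1), h k ^ 2
      ≤ 2 * C * (f (x 0) - f (x (n + 1))) := by
    intro n
    induction n with
    | zero => simpa using hdec 0
    | succ n ih =>
      rw [Finset.sum_range_succ]
      have := hdec (n + 1)
      linarith
  have hne : (Finset.range (K + 1)).Nonempty := ⟨0, Finset.mem_range.2 (Nat.succ_pos K)⟩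
  obtain ⟨k0, hk0mem, hk0min⟩ := Finset.exists_min_image (Finset.range (K + 1)) h hne
  have hk0K : k0 ≤ K := Nat.lt_succ_iff.1 (Finset.mem_range.1 hk0mem)
  have hcard : ((K : ℝ) + 1) * h k0 ^ 2 ≤ ∑ k ∈ Finset.range (K + 1), h k ^ 2 := by
    calc ((K : ℝ) + 1) * h k0 ^ 2 = ∑ _k ∈ Finset.range (K + 1), h k0 ^ 2 := by
          rw [Finset.sum_const, Finset.card_range]
          push_cast
          ring
      _ ≤ ∑ k ∈ Finset.range (K + 1), h k ^ 2 :=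
          Finset.sum_le_sum fun k hk => pow_le_pow_left₀ (hh0 k0) (hk0min k hk) 2
  have hfin : h k0 ^ 2 ≤ 2 * C * (f (x 0) - sInf (f '' S)) / (K + 1) := by
    rw [le_div_iff₀ (by positivity : (0:ℝ) < (K : ℝ) + 1)]
    have hlast : 2 * C * (f (x 0) - f (x (K + 1))) ≤ 2 * C * (f (x 0) - sInf (f '' S)) := by
      have := hFle _ (hxS (K + 1))
      nlinarith
    calc h k0 ^ 2 * ((K : ℝ) + 1) = ((K : ℝ) + 1) * h k0 ^ 2 := by ring
      _ ≤ ∑ k ∈ Finset.range (K + 1), h k ^ 2 := hcard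
      _ ≤ 2 * C * (f (x 0) - f (x (K + 1))) := hsum K
      _ ≤ 2 * C * (f (x 0) - sInf (f '' S)) := hlast
  have hsqrt : h k0 ≤ Real.sqrt (2 * C * (f (x 0) - sInf (f '' S)) / (K + 1)) := by
    rw [show h k0 = Real.sqrt (h k0 ^ 2) from (Real.sqrt_sq (hh0 k0)).symm]
    exact Real.sqrt_le_sqrt hfin
  refine ⟨k0, hk0K, ?_⟩
  apply csSup_le (Set.Nonempty.image _ ⟨x0, hx0S⟩)
  rintro b ⟨t, ht, rfl⟩
  have h1 := (horc k0 t ht).1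
  have h2 : ⟪g k0, x k0 - t⟫ ≤ ⟪g k0, x k0 - s k0⟫ := by
    have := hmin k0 t ht
    simp only [inner_sub_right] at this ⊢
    linarith
  have h3 : ⟪g k0, x k0 - s k0⟫ - δ ≤ h k0 := le_max_left _ _
  dsimp only
  linarith
end

section
/- Let S ⊂ ℝ^d be a nonempty compact convex set with diameter D, let f : ℝ^d → ℝ have L-Lipschitz gradient on S with G := sup_{x∈S} ‖∇f(x)‖ < ∞, C ≥ max{L D², G D}, f* := inf_{x∈S} f(x), and suppose each g_δ(x^k) satisfies the directionally relative condition |⟨∇f(x^k) − g_δ(x^k), s − x^k⟩| ≤ δ ‖∇f(x^k)‖ for all s ∈ S, with iterates x^{k+1} = x^k + ᾱ_k (s^k − x^k), ᾱ_k = max{G̃(x^k) − δ‖∇f(x^k)‖, 0}/C, s^k ∈ argmin_{s∈S} ⟨g_δ(x^k), s − x^k⟩. Suppose there exists r > 0 with dist(x^k, ∂S) ≥ r for all k, and δ < r/2. Then for every K ≥ 0, min_{0 ≤ k ≤ K} G(x^k) ≤ (1/(1 − 2δ/r)) √(2C (f(x^0) − f*)/(K+1)); consequently liminf_{k→∞}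 G(x^k) = 0. -/
open RealInnerProductSpace
set_option maxHeartbeats 1000000

lemma descent_lemma {d : ℕ} (S : Set (EuclideanSpace ℝ (Fin d)))
    (hSconv : Convex ℝ S) (f : EuclideanSpace ℝ (Fin d) → ℝ) (L : ℝ)
    (hdiff : ∀ x ∈ S, DifferentiableAt ℝ f x)
    (hLip : ∀ x ∈ S, ∀ y ∈ S, ‖gradient f x - gradient f y‖ ≤ L * ‖x - y‖)
    {x y : EuclideanSpace ℝ (Fin d)} (hx : x ∈ S) (hy : y ∈ S) :
    f y ≤ f x + ⟪gradient f x, y - x⟫ + L / 2 * ‖y - x‖ ^ 2 := by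
  set v := y - x with hv
  set γ : ℝ → EuclideanSpace ℝ (Fin d) := fun t => x + t • v with hγ
  have hγS : ∀ t ∈ Set.Icc (0:ℝ) 1, γ t ∈ S := by
    intro t ht
    have := hSconv hx hy (by linarith [ht.1, ht.2] : (0:ℝ) ≤ 1 - t) ht.1 (by ring)
    convert this using 1
    simp only [hγ, hv]
    module
  have hderiv : ∀ t ∈ Set.Icc (0:ℝ) 1,
      HasDerivAt (fun t => f (γ t)) ⟪gradient f (γ t), v⟫ t := by
    intro t ht
    have hd : HasFDerivAt f ((InnerProductSpace.toDual ℝ _) (gradient f (γ t))) (γ t) :=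
      (hdiff _ (hγS t ht)).hasGradientAt.hasFDerivAt
    have hγd : HasDerivAt γ v t := by
      have h := ((hasDerivAt_id t).smul_const v).const_add x
      rw [one_smul] at h
      exact h
    exact hd.comp_hasDerivAt t hγd
  have hlipγ : LipschitzOnWith (Real.toNNReal (L * ‖v‖))
      (fun t => gradient f (γ t)) (Set.Icc (0:ℝ) 1) := by
    rw [lipschitzOnWith_iff_dist_le_mul]
    intro a ha b hb
    rw [dist_eq_norm, dist_eq_norm]
    calc ‖gradient f (γ a) - gradient f (γ b)‖ ≤ L * ‖γ a - γ b‖ :=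
          hLip _ (hγS a ha) _ (hγS b hb)
      _ = L * ‖v‖ * |a - b| := by
          rw [mul_assoc]; congr 1
          simp only [hγ]
          rw [show x + a • v - (x + b • v) = (a - b) • v by module,
            norm_smul, Real.norm_eq_abs, mul_comm]
      _ ≤ Real.toNNReal (L * ‖v‖) * |a - b| := by
          gcongr
          exact Real.le_coe_toNNReal _
  have hcont : ContinuousOn (fun t => ⟪gradient f (γ t), v⟫) (Set.Icc (0:ℝ) 1) :=
    (hlipγ.continuousOn.inner continuousOn_const)
  have hintble : IntervalIntegrable (fun t => ⟪gradient f (γ t), v⟫)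
      MeasureTheory.volume 0 1 := by
    apply ContinuousOn.intervalIntegrable
    rwa [Set.uIcc_of_le (by norm_num : (0:ℝ) ≤ 1)]
  have hftc : ∫ t in (0:ℝ)..1, ⟪gradient f (γ t), v⟫ = f y - f x := by
    have := intervalIntegral.integral_eq_sub_of_hasDerivAt (f := fun t => f (γ t))
      (fun t ht => hderiv t (by rwa [Set.uIcc_of_le (by norm_num : (0:ℝ) ≤ 1)] at ht))
      hintble
    simpa [hγ, hv] using this
  have hbound : ∀ t ∈ Set.Icc (0:ℝ) 1,
      ⟪gradient f (γ t), v⟫ ≤ ⟪gradient f x, v⟫ + L * ‖v‖ ^ 2 * t := by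
    intro t ht
    have h1 : ⟪gradient f (γ t) - gradient f x, v⟫ ≤ L * ‖v‖ ^ 2 * t := by
      calc ⟪gradient f (γ t) - gradient f x, v⟫
          ≤ ‖gradient f (γ t) - gradient f x‖ * ‖v‖ := real_inner_le_norm _ _
        _ ≤ (L * ‖γ t - x‖) * ‖v‖ := by
            have hl : ‖gradient f (γ t) - gradient f x‖ ≤ L * ‖γ t - x‖ := by
              have := hLip _ (hγS t ht) _ (hγS 0 (by norm_num))
              have h0 : γ 0 = x := by simp [hγ]
              rwa [h0] at this
            exact mul_le_mul_of_nonneg_right hl (norm_nonneg _)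
        _ = L * ‖v‖ ^ 2 * t := by
            have : ‖γ t - x‖ = t * ‖v‖ := by
              simp only [hγ, add_sub_cancel_left, norm_smul, Real.norm_eq_abs,
                abs_of_nonneg ht.1]
            rw [this]; ring
    have := inner_sub_left (𝕜 := ℝ) (gradient f (γ t)) (gradient f x) v
    rw [this] at h1
    linarith
  have hint2 : ∫ t in (0:ℝ)..1, ⟪gradient f (γ t), v⟫
      ≤ ∫ t in (0:ℝ)..1, (⟪gradient f x, v⟫ + L * ‖v‖ ^ 2 * t) := by
    apply intervalIntegral.integral_mono_on (by norm_num) hintble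
    · exact (Continuous.intervalIntegrable (by fun_prop) _ _)
    · exact hbound
  have hval : ∫ t in (0:ℝ)..1, (⟪gradient f x, v⟫ + L * ‖v‖ ^ 2 * t)
      = ⟪gradient f x, v⟫ + L / 2 * ‖v‖ ^ 2 := by
    rw [intervalIntegral.integral_add intervalIntegrable_const
      (Continuous.intervalIntegrable (by fun_prop) _ _)]
    rw [intervalIntegral.integral_const_mul, integral_id]
    simp; ring
  rw [hftc] at hint2
  rw [hval] at hint2
  linarith

/-- Corollary 4.3 (residual-free rate under an interior margin): if all
iterates stay at distance at least `r` from the boundary of `S` and `δ < r/2`,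
then `min_{0≤k≤K} G(x^k) ≤ (1 - 2δ/r)⁻¹ √(2C (f(x⁰) - f*)/(K+1))`, and
consequently `liminf_k G(x^k) = 0`. -/
theorem relative_delta_oracle_margin_rate {d : ℕ}
    (S : Set (EuclideanSpace ℝ (Fin d)))
    (hSne : S.Nonempty) (hScomp : IsCompact S) (hSconv : Convex ℝ S)
    (f : EuclideanSpace ℝ (Fin d) → ℝ) (L C δ : ℝ)
    (hdiff : ∀ x ∈ S, DifferentiableAt ℝ f x)
    (hLip : ∀ x ∈ S, ∀ y ∈ S, ‖gradient f x - gradient f y‖ ≤ L * ‖x - y‖)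
    (hC : C ≥ max (L * (Metric.diam S) ^ 2)
      (sSup ((fun x => ‖gradient f x‖) '' S) * Metric.diam S))
    (x s g : ℕ → EuclideanSpace ℝ (Fin d))
    (hx0 : x 0 ∈ S)
    (horacle : ∀ k, ∀ t ∈ S,
      |⟪gradient f (x k) - g k, t - x k⟫| ≤ δ * ‖gradient f (x k)‖)
    (hsS : ∀ k, s k ∈ S)
    (hmin : ∀ k, ∀ t ∈ S, ⟪g k, s k - x k⟫ ≤ ⟪g k, t - x k⟫)
    (hupd : ∀ k, x (k + 1) = x k +
      (max (⟪g k, x k - s k⟫ - δ * ‖gradient f (x k)‖) 0 / C) • (s k - x k))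
    (r : ℝ) (hr : 0 < r)
    (hmargin : ∀ k, Metric.closedBall (x k) r ⊆ S)
    (hδr : δ < r / 2) :
    (∀ K : ℕ, ∃ k ≤ K,
      sSup ((fun t => ⟪gradient f (x k), x k - t⟫) '' S) ≤
        (1 / (1 - 2 * δ / r)) *
          Real.sqrt (2 * C * (f (x 0) - sInf (f '' S)) / (K + 1))) ∧
    Filter.liminf
      (fun k => sSup ((fun t => ⟪gradient f (x k), x k - t⟫) '' S))
      Filter.atTop = 0 := by
  have hcoeff : 0 < 1 - 2 * δ / r := by
    have : 2 * δ / r < 1 := by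
      rw [div_lt_one hr]; linarith
    linarith
  set D := Metric.diam S with hD
  set Gn := sSup ((fun x => ‖gradient f x‖) '' S) with hGn
  set m : ℕ → ℝ := fun k => max (⟪g k, x k - s k⟫ - δ * ‖gradient f (x k)‖) 0 with hm
  set Gap : ℕ → ℝ := fun k => sSup ((fun t => ⟪gradient f (x k), x k - t⟫) '' S) with hGap
  have hm0 : ∀ k, 0 ≤ m k := fun k => le_max_right _ _
  -- the subsingleton case
  by_cases hSsub : S.Subsingleton
  · have hxk : ∀ k, x k ∈ S := by
      intro k; induction k with
      | zero => exact hx0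
      | succ n ih =>
        rw [hupd n]
        have : s n - x n = 0 := by
          rw [sub_eq_zero]; exact hSsub (hsS n) ih
        rw [this]; simpa using ih
    have hGap0 : ∀ k, Gap k = 0 := by
      intro k
      have himg : (fun t => ⟪gradient f (x k), x k - t⟫) '' S = {0} := by
        apply Set.eq_singleton_iff_nonempty_unique_mem.mpr
        refine ⟨hSne.image _, ?_⟩
        rintro y ⟨t, ht, rfl⟩
        have : x k - t = 0 := by rw [sub_eq_zero]; exact hSsub (hxk k) ht
        simp [this]
      show sSup ((fun t => ⟪gradient f (x k), x k - t⟫) '' S) = 0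
      rw [himg]
      exact csSup_singleton 0
    constructor
    · intro K
      refine ⟨0, Nat.zero_le _, ?_⟩
      exact (hGap0 0).le.trans (by positivity)
    · show Filter.liminf Gap Filter.atTop = 0
      have : Gap = fun _ => (0:ℝ) := funext hGap0
      rw [this]
      exact Filter.liminf_const 0
  -- main case
  obtain ⟨a, ha, b, hb, hab⟩ := Set.not_subsingleton_iff.mp hSsub
  have hL0 : 0 ≤ L := by
    have h1 := hLip a ha b hb
    have h2 : 0 < ‖a - b‖ := by rwa [norm_pos_iff, sub_ne_zero]
    nlinarith [norm_nonneg (gradient f a - gradient f b)]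
  have hD0 : 0 ≤ D := Metric.diam_nonneg
  have hSbdd : Bornology.IsBounded S := hScomp.isBounded
  have hdistD : ∀ u ∈ S, ∀ w ∈ S, ‖u - w‖ ≤ D := fun u hu w hw => by
    rw [← dist_eq_norm]; exact Metric.dist_le_diam_of_mem hSbdd hu hw
  have hgradbdd : BddAbove ((fun x => ‖gradient f x‖) '' S) := by
    refine ⟨‖gradient f a‖ + L * D, ?_⟩
    rintro y ⟨z, hz, rfl⟩
    have h1 := hLip z hz a ha
    have h2 := norm_sub_norm_le (gradient f z) (gradient f a)
    have h3 : ‖z - a‖ ≤ D := hdistD z hz a ha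
    simp only
    nlinarith
  have hGnorm : ∀ z ∈ S, ‖gradient f z‖ ≤ Gn := fun z hz => le_csSup hgradbdd ⟨z, hz, rfl⟩
  have hGn0 : 0 ≤ Gn := le_trans (norm_nonneg _) (hGnorm a ha)
  have hGnDC : Gn * D ≤ C := le_trans (le_max_right _ _) hC
  have hLDC : L * D ^ 2 ≤ C := le_trans (le_max_left _ _) hC
  have hC0 : 0 ≤ C := le_trans (by positivity) hGnDC
  have hfc : ContinuousOn f S := fun z hz => (hdiff z hz).continuousAt.continuousWithinAt
  have hfbdd : BddBelow (f '' S) := (hScomp.image_of_continuousOn hfc).bddBelow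
  have hfstar : ∀ z ∈ S, sInf (f '' S) ≤ f z := fun z hz => csInf_le hfbdd ⟨z, hz, rfl⟩
  have hδnn : ∀ k, x k ∈ S → 0 ≤ δ * ‖gradient f (x k)‖ := by
    intro k hk
    have h := horacle k (x k) hk
    simpa using (abs_nonneg (⟪gradient f (x k) - g k, x k - x k⟫ : ℝ)).trans h
  have hmC : ∀ k, x k ∈ S → m k ≤ C := by
    intro k hk
    have h1 : ⟪gradient f (x k) - g k, s k - x k⟫ ≤ δ * ‖gradient f (x k)‖ :=
      (le_abs_self _).trans (horacle k (s k) (hsS k))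
    have e : ⟪gradient f (x k) - g k, s k - x k⟫
        = ⟪g k, x k - s k⟫ - ⟪gradient f (x k), x k - s k⟫ := by
      rw [show s k - x k = -(x k - s k) by abel, inner_neg_right, inner_sub_left]
      ring
    have h3 : ⟪gradient f (x k), x k - s k⟫ ≤ Gn * D :=
      le_trans (real_inner_le_norm _ _)
        (mul_le_mul (hGnorm _ hk) (hdistD _ hk _ (hsS k)) (norm_nonneg _) hGn0)
    refine max_le ?_ hC0
    rw [e] at h1
    linarith
  have hxS : ∀ k, x k ∈ S := by
    intro k; induction k with
    | zero => exact hx0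
    | succ n ih =>
      rw [hupd n]
      have hα0 : 0 ≤ m n / C := div_nonneg (hm0 n) hC0
      have hα1 : m n / C ≤ 1 := by
        rcases eq_or_lt_of_le hC0 with h|h
        · rw [← h]; simp
        · rw [div_le_one h]; exact hmC n ih
      exact hSconv.add_smul_sub_mem ih (hsS n) ⟨hα0, hα1⟩
  have hstep : ∀ k, f (x (k+1)) + m k ^ 2 / (2 * C) ≤ f (x k) := by
    intro k
    rcases eq_or_lt_of_le hC0 with hCz|hCpos
    · have hmz : m k = 0 := le_antisymm (hCz ▸ hmC k (hxS k)) (hm0 k)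
      have hxx : x (k+1) = x k := by
        rw [hupd k]
        rw [show max (⟪g k, x k - s k⟫ - δ * ‖gradient f (x k)‖) 0 = m k from rfl, hmz]
        simp
      rw [hxx, hmz]
      simp
    · -- C > 0
      have hvD : ‖s k - x k‖ ≤ D := by
        rw [norm_sub_rev]; exact hdistD _ (hxS k) _ (hsS k)
      have hdesc := descent_lemma S hSconv f L hdiff hLip (hxS k) (hxS (k+1))
      have hXd : x (k+1) - x k = (m k / C) • (s k - x k) := by
        rw [hupd k]; abel
      have hα0 : 0 ≤ m k / C := div_nonneg (hm0 k) hC0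
      have hnorm2 : ‖x (k+1) - x k‖ ^ 2 = (m k / C)^2 * ‖s k - x k‖^2 := by
        rw [hXd, norm_smul, Real.norm_eq_abs, abs_of_nonneg hα0, mul_pow]
      have hinner : ⟪gradient f (x k), x (k+1) - x k⟫
          = (m k / C) * ⟪gradient f (x k), s k - x k⟫ := by
        rw [hXd, real_inner_smul_right]
      -- claim A
      have hA : ⟪gradient f (x k), s k - x k⟫
          ≤ -(⟪g k, x k - s k⟫ - δ * ‖gradient f (x k)‖) := by
        have h1 : ⟪gradient f (x k) - g k, s k - x k⟫ ≤ δ * ‖gradient f (x k)‖ :=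
          (le_abs_self _).trans (horacle k (s k) (hsS k))
        have e : ⟪gradient f (x k) - g k, s k - x k⟫
            = ⟪g k, x k - s k⟫ - ⟪gradient f (x k), x k - s k⟫ := by
          rw [show s k - x k = -(x k - s k) by abel, inner_neg_right, inner_sub_left]
          ring
        have e2 : ⟪gradient f (x k), s k - x k⟫ = -⟪gradient f (x k), x k - s k⟫ := by
          rw [show s k - x k = -(x k - s k) by abel, inner_neg_right]
        rw [e] at h1
        rw [e2]
        linarith
      -- claim B
      have hB : (m k / C) * ⟪gradient f (x k), s k - x k⟫ ≤ -((m k / C) * m k) := by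
        rcases le_or_gt (⟪g k, x k - s k⟫ - δ * ‖gradient f (x k)‖) 0 with h|h
        · have hmz : m k = 0 := max_eq_right h
          rw [hmz]
          simp
        · have hmz : m k = ⟪g k, x k - s k⟫ - δ * ‖gradient f (x k)‖ := max_eq_left h.le
          have := mul_le_mul_of_nonneg_left hA hα0
          rw [← hmz] at this
          linarith
      -- quadratic term
      have hquad : L / 2 * ‖x (k+1) - x k‖ ^ 2 ≤ (m k / C)^2 * (C / 2) := by
        rw [hnorm2]
        have h1 : L * ‖s k - x k‖^2 ≤ L * D^2 := by
          apply mul_le_mul_of_nonneg_left _ hL0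
          have := sq_le_sq' (by linarith [norm_nonneg (s k - x k)]) hvD
          exact this
        have h2 : L * ‖s k - x k‖^2 ≤ C := le_trans h1 hLDC
        nlinarith [sq_nonneg (m k / C)]
      have harith : -((m k / C) * m k) + (m k / C)^2 * (C / 2) = - (m k ^2 / (2*C)) := by
        field_simp
        ring
      rw [hinner] at hdesc
      linarith
  have hsum2 : ∀ K : ℕ, ∑ k ∈ Finset.range K, m k ^ 2 ≤ 2*C*(f (x 0) - sInf (f '' S)) := by
    have hsum : ∀ K : ℕ, ∑ k ∈ Finset.range K, m k ^ 2 / (2*C) ≤ f (x 0) - f (x K) := by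
      intro K; induction K with
      | zero => simp
      | succ n ih =>
        rw [Finset.sum_range_succ]
        have := hstep n
        linarith
    intro K
    rcases eq_or_lt_of_le hC0 with hCz|hCpos
    · have hz : ∀ k, m k = 0 := fun k => le_antisymm (hCz ▸ hmC k (hxS k)) (hm0 k)
      rw [Finset.sum_congr rfl (fun k _ => by rw [hz k])]
      simp [← hCz]
    · have h1 := (hsum K).trans (by linarith [hfstar _ (hxS K)] :
        f (x 0) - f (x K) ≤ f (x 0) - sInf (f '' S))
      rw [← Finset.sum_div, div_le_iff₀ (by linarith : (0:ℝ) < 2*C)] at h1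
      linarith
  have hGapBdd : ∀ k, BddAbove ((fun t => ⟪gradient f (x k), x k - t⟫) '' S) := by
    intro k
    have hc : ContinuousOn (fun t => ⟪gradient f (x k), x k - t⟫) S :=
      (Continuous.inner continuous_const (continuous_const.sub continuous_id)).continuousOn
    exact (hScomp.image_of_continuousOn hc).bddAbove
  have hGapnn : ∀ k, 0 ≤ Gap k := by
    intro k
    apply le_csSup (hGapBdd k)
    exact ⟨x k, hxS k, by simp⟩
  have hGapub : ∀ k, Gap k ≤ m k + 2*(δ*‖gradient f (x k)‖) := by
    intro k
    apply csSup_le (hSne.image _)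
    rintro y ⟨t, ht, rfl⟩
    simp only
    have e1 : (⟪gradient f (x k), x k - t⟫:ℝ)
        = ⟪g k, x k - t⟫ + ⟪gradient f (x k) - g k, x k - t⟫ := by
      rw [inner_sub_left]; ring
    have e2 : (⟪gradient f (x k) - g k, x k - t⟫:ℝ) ≤ δ * ‖gradient f (x k)‖ := by
      have h := horacle k t ht
      rw [show x k - t = -(t - x k) by abel, inner_neg_right]
      exact (neg_le_abs _).trans h
    have e3 : (⟪g k, x k - t⟫:ℝ) ≤ ⟪g k, x k - s k⟫ := by
      have h := hmin k t ht
      have e4 : (⟪g k, s k - x k⟫:ℝ) = -⟪g k, x k - s k⟫ := by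
        rw [show s k - x k = -(x k - s k) by abel, inner_neg_right]
      have e5 : (⟪g k, t - x k⟫:ℝ) = -⟪g k, x k - t⟫ := by
        rw [show t - x k = -(x k - t) by abel, inner_neg_right]
      rw [e4, e5] at h
      linarith
    have e6 : ⟪g k, x k - s k⟫ - δ*‖gradient f (x k)‖ ≤ m k := le_max_left _ _
    linarith
  have hGapm : ∀ k, Gap k ≤ (1/(1 - 2*δ/r)) * m k := by
    intro k
    by_cases hz : gradient f (x k) = 0
    · have : Gap k = 0 := by
        have himg : (fun t => ⟪gradient f (x k), x k - t⟫) '' S = {0} := by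
          rw [show (fun t => (⟪gradient f (x k), x k - t⟫:ℝ)) = fun _ => (0:ℝ) by
            funext t; rw [hz]; exact inner_zero_left _]
          exact hSne.image_const 0
        show sSup ((fun t => ⟪gradient f (x k), x k - t⟫) '' S) = 0
        rw [himg]; exact csSup_singleton 0
      rw [this]
      have := hm0 k
      positivity
    · have hnz : 0 < ‖gradient f (x k)‖ := norm_pos_iff.mpr hz
      have hδ0 : 0 ≤ δ :=
        (mul_nonneg_iff_of_pos_right hnz).mp (hδnn k (hxS k))
      have hcnn : (0:ℝ) ≤ r/‖gradient f (x k)‖ := div_nonneg hr.le hnz.le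
      have htm : x k - (r/‖gradient f (x k)‖) • gradient f (x k) ∈ S := by
        apply hmargin k
        rw [Metric.mem_closedBall, dist_eq_norm]
        have e : x k - (r/‖gradient f (x k)‖) • gradient f (x k) - x k
            = -((r/‖gradient f (x k)‖) • gradient f (x k)) := by abel
        rw [e, norm_neg, norm_smul, Real.norm_eq_abs, abs_of_nonneg hcnn,
          div_mul_cancel₀ _ hnz.ne']
      have hlow : r * ‖gradient f (x k)‖ ≤ Gap k := by
        apply le_csSup (hGapBdd k)
        refine ⟨_, htm, ?_⟩
        simp only
        rw [show x k - (x k - (r/‖gradient f (x k)‖) • gradient f (x k))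
          = (r/‖gradient f (x k)‖) • gradient f (x k) by abel]
        rw [real_inner_smul_right, real_inner_self_eq_norm_sq]
        field_simp
      have h2 : 2*(δ*‖gradient f (x k)‖) ≤ (2*δ/r) * Gap k := by
        have h3 : 2*δ/r * (r*‖gradient f (x k)‖) ≤ 2*δ/r * Gap k :=
          mul_le_mul_of_nonneg_left hlow (by positivity)
        have h4 : 2*δ/r * (r*‖gradient f (x k)‖) = 2*(δ*‖gradient f (x k)‖) := by
          field_simp
        linarith
      have h5 := hGapub k
      have h6 : (1 - 2*δ/r) * Gap k ≤ m k := by nlinarith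
      rw [one_div, ← div_eq_inv_mul, le_div_iff₀ hcoeff]
      linarith [h6]
  have hΔ : 0 ≤ f (x 0) - sInf (f '' S) := by linarith [hfstar _ hx0]
  have hcoeffnn : 0 ≤ 1/(1 - 2*δ/r) := by positivity
  constructor
  · intro K
    obtain ⟨k0, hk0mem, hk0min⟩ := Finset.exists_min_image (Finset.range (K+1)) m ⟨0, by simp⟩
    rw [Finset.mem_range] at hk0mem
    refine ⟨k0, Nat.lt_succ_iff.mp hk0mem, ?_⟩
    have hsumK := hsum2 (K+1)
    have hlb : ((K:ℝ)+1) * m k0 ^2 ≤ ∑ k ∈ Finset.range (K+1), m k ^2 := by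
      calc ((K:ℝ)+1) * m k0^2 = ∑ _k ∈ Finset.range (K+1), m k0^2 := by
            rw [Finset.sum_const, Finset.card_range]; ring
        _ ≤ ∑ k ∈ Finset.range (K+1), m k^2 := by
            apply Finset.sum_le_sum
            intro j hj
            have h := hk0min j (by simpa using hj)
            nlinarith [hm0 k0, hm0 j]
    have hK1 : (0:ℝ) < (K:ℝ)+1 := by positivity
    have hmsq : m k0 ^ 2 ≤ 2 * C * (f (x 0) - sInf (f '' S)) / ((K:ℝ)+1) := by
      rw [le_div_iff₀ hK1]
      nlinarith
    have hmle : m k0 ≤ Real.sqrt (2 * C * (f (x 0) - sInf (f '' S)) / ((K:ℝ)+1)) := by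
      rw [Real.le_sqrt (hm0 k0) (by positivity)]
      exact hmsq
    exact le_trans (hGapm k0) (mul_le_mul_of_nonneg_left hmle hcoeffnn)
  · have hsummable : Summable (fun k => m k ^ 2) :=
      summable_of_sum_range_le (fun n => sq_nonneg (m n)) (fun n => hsum2 n)
    have hm2 : Filter.Tendsto (fun k => m k ^2) Filter.atTop (nhds 0) :=
      hsummable.tendsto_atTop_zero
    have hmt : Filter.Tendsto m Filter.atTop (nhds 0) := by
      have h := (Real.continuous_sqrt.tendsto 0).comp hm2
      simp only [Function.comp_def, Real.sqrt_zero] at h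
      exact h.congr (fun k => Real.sqrt_sq (hm0 k))
    have hGt : Filter.Tendsto Gap Filter.atTop (nhds 0) := by
      apply squeeze_zero hGapnn hGapm
      have := hmt.const_mul (1/(1 - 2*δ/r))
      simpa using this
    exact hGt.liminf_eq
end
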